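/- Suppose φ : G → R is a nonzero positive homomorphism and s > 0 satisfies φ ∘ γ_* = s·φ with s ≠ 1. Then s/(1+s) ∈ F_1 and there is r > 0 with φ((x_n)_n) = r·Σ_{n∈Z} x_n(s/(1+s)) for all (x_n)_n ∈ G. -/

import Mathlib

open scoped BigOperators

noncomputable section

/-- The open interval `(0,1)` on which the functions of `G₀ = ℤ[t,t⁻¹,(1-t)⁻¹]` live. -/
def I01 : Set ℝ := Set.Ioo 0 1

/-- Membership in `G₀ = ℤ[t,t⁻¹,(1-t)⁻¹]`, viewed as continuous functions on `(0,1)`: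
`f ∈ G₀` iff `f(t) = p(t)/(tᵐ(1-t)ⁿ)` for some integer polynomial `p`. -/
def memG0 (f : I01 → ℝ) : Prop :=
  ∃ (p : Polynomial ℤ) (m n : ℕ),
    ∀ t : I01, f t = (Polynomial.aeval (t : ℝ) p) / ((t : ℝ) ^ m * (1 - (t : ℝ)) ^ n)

/-- The positive cone `G_F⁺ = {f ∈ G₀ : f > 0 on F} ∪ {0}`. -/
def memGFp (F : Set ℝ) (f : I01 → ℝ) : Prop :=
  memG0 f ∧ ((∀ t : I01, (t : ℝ) ∈ F → 0 < f t) ∨ f = 0)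

/-- Membership in `G = ⊕_{n ∈ ℤ} G₀` (finitely supported sequences of elements of `G₀`). -/
def memG (x : ℤ → I01 → ℝ) : Prop :=
  (∀ n : ℤ, memG0 (x n)) ∧ {n : ℤ | x n ≠ 0}.Finite

/-- `Σ_{n ∈ ℤ} αⁿ(xₙ)(t)`, where `α` is multiplication by `t/(1-t)`. -/
def sumAlpha (x : ℤ → I01 → ℝ) (t : I01) : ℝ :=
  ∑ᶠ n : ℤ, ((t : ℝ) / (1 - (t : ℝ))) ^ n * x n t

/-- `Σ_{n ∈ ℤ} xₙ(t)`. -/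
def sumPlain (x : ℤ → I01 → ℝ) (t : I01) : ℝ := ∑ᶠ n : ℤ, x n t

/-- The automorphism `γ₊ : G → G`, `γ₊((xₙ)ₙ) = (α(x_{n+1}))ₙ`. -/
def gammaStar (x : ℤ → I01 → ℝ) : ℤ → I01 → ℝ :=
  fun n t => ((t : ℝ) / (1 - (t : ℝ))) * x (n + 1) t

/-- The positive cone `G⁺` of `G` determined by `F` and `F₁`. -/
def memGplus (F F1 : Set ℝ) (x : ℤ → I01 → ℝ) : Prop :=
  memG x ∧
    (((∀ t : I01, (t : ℝ) ∈ F → 0 < sumAlpha x t) ∧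
      (∀ t : I01, (t : ℝ) ∈ F1 → 0 < sumPlain x t)) ∨ x = 0)

/-- The cone `G⁺⁺ = {0} ∪ {x ∈ G : Σₙ αⁿ(xₙ) > 0 on F}`. -/
def memGpp (F : Set ℝ) (x : ℤ → I01 → ℝ) : Prop :=
  memG x ∧ ((∀ t : I01, (t : ℝ) ∈ F → 0 < sumAlpha x t) ∨ x = 0)

/-- The sequence in `G` supported at `n = 0` with value `a`. -/
def delta0 (a : I01 → ℝ) : ℤ → I01 → ℝ := fun n => if n = 0 then a else 0



/-! ### Auxiliary development -/

namespace Stmt13Aux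

lemma I01.pos (t : I01) : 0 < (t:ℝ) := t.2.1
lemma I01.lt_one (t : I01) : (t:ℝ) < 1 := t.2.2
lemma I01.ne0 (t : I01) : (t:ℝ) ≠ 0 := ne_of_gt t.2.1
lemma I01.one_sub_pos (t : I01) : 0 < 1 - (t:ℝ) := by linarith [t.2.2]
lemma I01.one_sub_ne (t : I01) : 1 - (t:ℝ) ≠ 0 := ne_of_gt (I01.one_sub_pos t)

/-- the function `u(t) = t/(1-t)`. -/
def uu (t : I01) : ℝ := (t:ℝ) / (1 - (t:ℝ))

lemma uu_pos (t : I01) : 0 < uu t := div_pos t.2.1 (I01.one_sub_pos t)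
lemma uu_ne (t : I01) : uu t ≠ 0 := ne_of_gt (uu_pos t)

lemma memG0_zero : memG0 (0 : I01 → ℝ) :=
  ⟨0, 0, 0, fun t => by simp⟩

lemma memG0_const (z : ℤ) : memG0 (fun _ => (z:ℝ)) :=
  ⟨Polynomial.C z, 0, 0, fun t => by simp⟩

lemma memG0_one : memG0 (fun _ => (1:ℝ)) := by
  simpa using memG0_const 1

lemma memG0_add {f g : I01 → ℝ} (hf : memG0 f) (hg : memG0 g) :
    memG0 (fun t => f t + g t) := by
  obtain ⟨p, m, n, hp⟩ := hf
  obtain ⟨q, m', n', hq⟩ := hg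
  refine ⟨p * (Polynomial.X ^ m' * (1 - Polynomial.X) ^ n')
      + q * (Polynomial.X ^ m * (1 - Polynomial.X) ^ n), m + m', n + n', fun t => ?_⟩
  have h1 : (t:ℝ) ≠ 0 := I01.ne0 t
  have h2 : 1 - (t:ℝ) ≠ 0 := I01.one_sub_ne t
  have hb : ((t:ℝ) ^ m * (1 - (t:ℝ)) ^ n) ≠ 0 :=
    mul_ne_zero (pow_ne_zero _ h1) (pow_ne_zero _ h2)
  have hd : ((t:ℝ) ^ m' * (1 - (t:ℝ)) ^ n') ≠ 0 :=
    mul_ne_zero (pow_ne_zero _ h1) (pow_ne_zero _ h2)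
  simp only []
  rw [hp, hq, div_add_div _ _ hb hd]
  rw [div_eq_div_iff (mul_ne_zero hb hd) (mul_ne_zero (pow_ne_zero _ h1) (pow_ne_zero _ h2))]
  simp only [map_add, map_mul, map_pow, map_sub, map_one, Polynomial.aeval_X]
  ring

lemma memG0_mul {f g : I01 → ℝ} (hf : memG0 f) (hg : memG0 g) :
    memG0 (fun t => f t * g t) := by
  obtain ⟨p, m, n, hp⟩ := hf
  obtain ⟨q, m', n', hq⟩ := hg
  refine ⟨p * q, m + m', n + n', fun t => ?_⟩
  have h1 : (t:ℝ) ≠ 0 := I01.ne0 t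
  have h2 : 1 - (t:ℝ) ≠ 0 := I01.one_sub_ne t
  simp only []
  rw [hp, hq, div_mul_div_comm, map_mul, pow_add, pow_add]
  ring

lemma memG0_neg {f : I01 → ℝ} (hf : memG0 f) : memG0 (fun t => -(f t)) := by
  obtain ⟨p, m, n, hp⟩ := hf
  exact ⟨-p, m, n, fun t => by simp only []; rw [hp]; simp [neg_div]⟩

lemma memG0_uu : memG0 uu :=
  ⟨Polynomial.X, 0, 1, fun t => by simp [uu]⟩

lemma memG0_uuInv : memG0 (fun t => (1 - (t:ℝ)) / t) :=
  ⟨1 - Polynomial.X, 1, 0, fun t => by simp⟩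

lemma memG0_pow {f : I01 → ℝ} (hf : memG0 f) (n : ℕ) : memG0 (fun t => f t ^ n) := by
  induction n with
  | zero => simpa using memG0_one
  | succ k ih =>
      have := memG0_mul ih hf
      simpa [pow_succ] using this

lemma memG0_uu_zpow (i : ℤ) : memG0 (fun t => uu t ^ i) := by
  cases i with
  | ofNat n => simpa using memG0_pow memG0_uu n
  | negSucc n =>
      have h : (fun t : I01 => uu t ^ (Int.negSucc n))
          = fun t : I01 => ((1 - (t:ℝ)) / t) ^ (n + 1) := by
        funext t
        rw [zpow_negSucc, ← inv_pow, uu, inv_div]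
      rw [h]
      exact memG0_pow memG0_uuInv (n + 1)

lemma memG0_continuous {f : I01 → ℝ} (hf : memG0 f) : Continuous f := by
  obtain ⟨p, m, n, hp⟩ := hf
  have : f = fun t : I01 => (Polynomial.aeval (t:ℝ) p) / ((t:ℝ) ^ m * (1 - (t:ℝ)) ^ n) :=
    funext hp
  rw [this]
  apply Continuous.div
  · exact (p.continuous_aeval).comp continuous_subtype_val
  · continuity
  · intro t
    exact mul_ne_zero (pow_ne_zero _ (I01.ne0 t)) (pow_ne_zero _ (I01.one_sub_ne t))


/-- sequence supported at slot `i`. -/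
def slot (i : ℤ) (f : I01 → ℝ) : ℤ → I01 → ℝ := fun n => if n = i then f else 0

lemma slot_zero (f : I01 → ℝ) : slot 0 f = delta0 f := rfl

lemma memG_slot (i : ℤ) {f : I01 → ℝ} (hf : memG0 f) : memG (slot i f) := by
  constructor
  · intro n
    by_cases h : n = i
    · simpa [slot, h] using hf
    · simpa [slot, h] using memG0_zero
  · apply Set.Finite.subset (Set.finite_singleton i)
    intro n hn
    simp only [Set.mem_setOf_eq, slot] at hn
    by_contra h
    exact hn (by simp [Set.mem_singleton_iff] at h; simp [h])

lemma memG_add {x y : ℤ → I01 → ℝ} (hx : memG x) (hy : memG y) : memG (x + y) := by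
  constructor
  · intro n
    have := memG0_add (hx.1 n) (hy.1 n)
    exact this
  · apply Set.Finite.subset (hx.2.union hy.2)
    intro n hn
    by_contra h
    simp only [Set.mem_union, Set.mem_setOf_eq, not_or, not_not] at h
    exact hn (by simp [Set.mem_setOf_eq, Pi.add_apply, h.1, h.2])

lemma memG_delta0 {f : I01 → ℝ} (hf : memG0 f) : memG (delta0 f) := by
  rw [← slot_zero]; exact memG_slot 0 hf

lemma sumAlpha_eq_sum (x : ℤ → I01 → ℝ) (S : Finset ℤ) (h : ∀ n ∉ S, x n = 0) (t : I01) :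
    sumAlpha x t = ∑ i ∈ S, ((t : ℝ) / (1 - (t : ℝ))) ^ i * x i t := by
  apply finsum_eq_sum_of_support_subset
  intro n hn
  simp only [Function.mem_support] at hn
  by_contra hns
  exact hn (by rw [h n hns]; simp)

lemma sumPlain_eq_sum (x : ℤ → I01 → ℝ) (S : Finset ℤ) (h : ∀ n ∉ S, x n = 0) (t : I01) :
    sumPlain x t = ∑ i ∈ S, x i t := by
  apply finsum_eq_sum_of_support_subset
  intro n hn
  simp only [Function.mem_support] at hn
  by_contra hns
  exact hn (by rw [h n hns]; simp)

lemma sumAlpha_delta0 (f : I01 → ℝ) (t : I01) : sumAlpha (delta0 f) t = f t := by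
  have : sumAlpha (delta0 f) t = ∑ i ∈ ({0} : Finset ℤ), ((t : ℝ) / (1 - (t : ℝ))) ^ i * (delta0 f) i t := by
    apply sumAlpha_eq_sum
    intro n hn
    simp only [Finset.mem_singleton] at hn
    simp [delta0, hn]
  rw [this]
  simp [delta0]

lemma sumPlain_delta0 (f : I01 → ℝ) (t : I01) : sumPlain (delta0 f) t = f t := by
  have : sumPlain (delta0 f) t = ∑ i ∈ ({0} : Finset ℤ), (delta0 f) i t := by
    apply sumPlain_eq_sum
    intro n hn
    simp only [Finset.mem_singleton] at hn
    simp [delta0, hn]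
  rw [this]
  simp [delta0]

section Phi

variable (φ : (ℤ → I01 → ℝ) → ℝ)
variable (hadd : ∀ x y : ℤ → I01 → ℝ, memG x → memG y → φ (x + y) = φ x + φ y)

lemma memG_zero : memG (0 : ℤ → I01 → ℝ) := by
  constructor
  · intro n; simpa using memG0_zero
  · apply Set.Finite.subset (Set.finite_empty)
    intro n hn
    simp at hn

include hadd in
lemma phi_zero : φ 0 = 0 := by
  have := hadd 0 0 memG_zero memG_zero
  simp only [add_zero] at this
  linarith

lemma delta0_add (f g : I01 → ℝ) :
    delta0 (fun t => f t + g t) = delta0 f + delta0 g := by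
  funext n t
  simp only [delta0, Pi.add_apply]
  by_cases h : n = 0 <;> simp [h]

include hadd in
lemma psi_add {f g : I01 → ℝ} (hf : memG0 f) (hg : memG0 g) :
    φ (delta0 (fun t => f t + g t)) = φ (delta0 f) + φ (delta0 g) := by
  rw [delta0_add]
  exact hadd _ _ (memG_delta0 hf) (memG_delta0 hg)

include hadd in
lemma psi_neg {f : I01 → ℝ} (hf : memG0 f) :
    φ (delta0 (fun t => -(f t))) = - φ (delta0 f) := by
  have h0 : φ (delta0 (fun t => f t + -(f t))) = φ (delta0 f) + φ (delta0 (fun t => -(f t))) :=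
    psi_add φ hadd hf (memG0_neg hf)
  have h1 : (fun t : I01 => f t + -(f t)) = fun _ => (0:ℝ) := by funext t; ring
  have h2 : delta0 (fun _ : I01 => (0:ℝ)) = 0 := by
    funext n t
    by_cases h : n = 0 <;> simp [delta0, h]
  rw [h1, h2, phi_zero φ hadd] at h0
  linarith

include hadd in
lemma psi_zsmul (z : ℤ) {f : I01 → ℝ} (hf : memG0 f) :
    φ (delta0 (fun t => (z:ℝ) * f t)) = z * φ (delta0 f) := by
  induction z using Int.induction_on with
  | zero => 
      have h1 : (fun t : I01 => ((0:ℤ):ℝ) * f t) = fun _ => (0:ℝ) := by funext t; simp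
      have h2 : delta0 (fun _ : I01 => (0:ℝ)) = 0 := by
        funext n t; by_cases h : n = 0 <;> simp [delta0, h]
      rw [h1, h2, phi_zero φ hadd]; simp
  | succ k ih =>
      have h1 : (fun t : I01 => ((k+1:ℤ):ℝ) * f t) = fun t => ((k:ℤ):ℝ) * f t + f t := by
        funext t; push_cast; ring
      rw [h1, psi_add φ hadd (memG0_mul (memG0_const k) hf) hf, ih]
      push_cast; ring
  | pred k ih =>
      have h1 : (fun t : I01 => ((-k-1:ℤ):ℝ) * f t) = fun t => ((-k:ℤ):ℝ) * f t + -(f t) := by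
        funext t; push_cast; ring
      rw [h1, psi_add φ hadd (memG0_mul (memG0_const (-k)) hf) (memG0_neg hf),
        ih, psi_neg φ hadd hf]
      push_cast; ring


lemma gammaStar_slot (i : ℤ) (f : I01 → ℝ) :
    gammaStar (slot (i+1) f) = slot i (fun t => uu t * f t) := by
  funext n t
  simp only [gammaStar, slot]
  by_cases h : n = i
  · have h' : n + 1 = i + 1 := by omega
    simp [h, h', uu]
  · have h' : ¬ (n + 1 = i + 1) := by omega
    simp [h, h']

variable (s : ℝ)

omit hadd in
lemma phi_slot (hs0 : s ≠ 0)
    (heq' : ∀ x : ℤ → I01 → ℝ, memG x → φ (gammaStar x) = s * φ x) :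
    ∀ (i : ℤ) (f : I01 → ℝ), memG0 f →
      φ (slot i f) = s ^ (-i) * φ (delta0 (fun t => uu t ^ i * f t)) := by
  intro i
  induction i using Int.induction_on with
  | zero =>
      intro f hf
      have h1 : (fun t : I01 => uu t ^ (0:ℤ) * f t) = f := by funext t; simp
      rw [h1]
      simp [slot_zero]
  | succ k ih =>
      intro f hf
      have hrel := heq' (slot ((k:ℤ)+1) f) (memG_slot _ hf)
      rw [gammaStar_slot] at hrel
      have h2 := ih (fun t => uu t * f t) (memG0_mul memG0_uu hf)
      have h3 : (fun t : I01 => uu t ^ (k:ℤ) * (uu t * f t))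
          = fun t : I01 => uu t ^ ((k:ℤ)+1) * f t := by
        funext t
        rw [zpow_add_one₀ (uu_ne t)]
        ring
      rw [h3] at h2
      have h4 : φ (slot ((k:ℤ)+1) f) = s⁻¹ * φ (slot (k:ℤ) (fun t => uu t * f t)) := by
        rw [hrel]
        field_simp
      rw [h4, h2]
      have h5 : s ^ (-((k:ℤ)+1)) = s ^ (-(k:ℤ)) * s⁻¹ := by
        rw [← zpow_neg_one, ← zpow_add₀ hs0]
        ring_nf
      rw [h5]
      ring
  | pred k ih =>
      intro f hf
      set g : I01 → ℝ := fun t => ((1 - (t:ℝ)) / t) * f t with hg_def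
      have hg : memG0 g := memG0_mul memG0_uuInv hf
      have hrel := heq' (slot ((-(k:ℤ)-1)+1) g) (memG_slot _ hg)
      rw [gammaStar_slot] at hrel
      have huug : (fun t : I01 => uu t * g t) = f := by
        funext t
        have h1 : (t:ℝ) ≠ 0 := I01.ne0 t
        have h2 : 1 - (t:ℝ) ≠ 0 := I01.one_sub_ne t
        simp only [hg_def, uu]
        field_simp
      rw [huug] at hrel
      have hsimp : (-(k:ℤ)-1)+1 = -(k:ℤ) := by ring
      rw [hsimp] at hrel
      have h2 := ih g hg
      have h3 : (fun t : I01 => uu t ^ (-(k:ℤ)) * g t)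
          = fun t : I01 => uu t ^ (-(k:ℤ)-1) * f t := by
        funext t
        have hinv : (1 - (t:ℝ)) / t = uu t ^ (-1:ℤ) := by
          rw [zpow_neg_one, uu, inv_div]
        simp only [hg_def, hinv]
        rw [← mul_assoc, ← zpow_add₀ (uu_ne t)]
        have he : (-(k:ℤ)) + -1 = -(k:ℤ) - 1 := by ring
        rw [he]
      rw [h3] at h2
      rw [hrel, h2]
      have h5 : s ^ (-(-(k:ℤ)-1)) = s * s ^ (-(-(k:ℤ))) := by
        rw [show (-(-(k:ℤ)-1)) = 1 + (-(-(k:ℤ))) by ring, zpow_add₀ hs0, zpow_one]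
      rw [h5]
      ring

variable (F F1 : Set ℝ)

lemma psi_pos (hpos : ∀ x : ℤ → I01 → ℝ, memGplus F F1 x → 0 ≤ φ x)
    {f : I01 → ℝ} (hf : memG0 f)
    (hF : ∀ t : I01, (t:ℝ) ∈ F → 0 < f t) (hF1 : ∀ t : I01, (t:ℝ) ∈ F1 → 0 < f t) :
    0 ≤ φ (delta0 f) := by
  apply hpos
  refine ⟨memG_delta0 hf, Or.inl ⟨?_, ?_⟩⟩
  · intro t ht; rw [sumAlpha_delta0]; exact hF t ht
  · intro t ht; rw [sumPlain_delta0]; exact hF1 t ht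

include hadd in
lemma phi_decomp : ∀ (S : Finset ℤ) (x : ℤ → I01 → ℝ), memG x → (∀ n ∉ S, x n = 0) →
    φ x = ∑ i ∈ S, φ (slot i (x i)) := by
  intro S
  induction S using Finset.induction_on with
  | empty =>
      intro x hx h
      have hx0 : x = 0 := by
        funext n
        exact h n (by simp)
      rw [hx0, phi_zero φ hadd]
      simp
  | @insert a S ha ih =>
      intro x hx h
      set x' : ℤ → I01 → ℝ := fun n => if n = a then 0 else x n with hx'def
      have hxeq : x = slot a (x a) + x' := by
        funext n t
        simp only [slot, Pi.add_apply, hx'def]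
        by_cases hna : n = a
        · subst hna; simp
        · simp [hna]
      have hmx' : memG x' := by
        constructor
        · intro n
          by_cases hna : n = a
          · simpa [hx'def, hna] using memG0_zero
          · simpa [hx'def, hna] using hx.1 n
        · apply hx.2.subset
          intro n hn
          simp only [Set.mem_setOf_eq, hx'def] at hn ⊢
          by_cases hna : n = a
          · simp [hna] at hn
          · simpa [hna] using hn
      have hsupp : ∀ n ∉ S, x' n = 0 := by
        intro n hn
        by_cases hna : n = a
        · simp [hx'def, hna]
        · have : n ∉ insert a S := by simp [hna, hn]
          simp [hx'def, hna, h n this]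
      have hdec := hadd (slot a (x a)) x' (memG_slot _ (hx.1 a)) hmx'
      have h1 : φ x = φ (slot a (x a)) + φ x' := by
        conv_lhs => rw [hxeq]
        exact hdec
      rw [h1, ih x' hmx' hsupp, Finset.sum_insert ha]
      congr 1
      apply Finset.sum_congr rfl
      intro i hi
      have hia : x' i = x i := by
        have : i ≠ a := by rintro rfl; exact ha hi
        simp [hx'def, this]
      rw [hia]


include hadd in
lemma psi_const (a : ℤ) :
    φ (delta0 (fun _ : I01 => (a:ℝ))) = a * φ (delta0 (fun _ : I01 => (1:ℝ))) := by
  have h1 : (fun _ : I01 => (a:ℝ)) = fun t : I01 => (a:ℝ) * (fun _ : I01 => (1:ℝ)) t := by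
    funext t; simp
  rw [h1]
  exact psi_zsmul φ hadd a memG0_one

include hadd in
lemma psi_comb (n a b e : ℤ) {h : I01 → ℝ} (hh : memG0 h) :
    φ (delta0 (fun t => (((n:ℝ) * h t + (a:ℝ)) + (b:ℝ) * uu t) + (e:ℝ) * (uu t)^2))
      = n * φ (delta0 h) + a * φ (delta0 (fun _ => (1:ℝ))) + b * φ (delta0 uu)
        + e * φ (delta0 (fun t => (uu t)^2)) := by
  have m1 : memG0 (fun t : I01 => (n:ℝ) * h t) := memG0_mul (memG0_const n) hh
  have m2 : memG0 (fun t : I01 => (a:ℝ)) := memG0_const a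
  have m3 : memG0 (fun t : I01 => (b:ℝ) * uu t) := memG0_mul (memG0_const b) memG0_uu
  have m4 : memG0 (fun t : I01 => (e:ℝ) * (uu t)^2) :=
    memG0_mul (memG0_const e) (memG0_pow memG0_uu 2)
  rw [psi_add φ hadd (memG0_add (memG0_add m1 m2) m3) m4,
    psi_add φ hadd (memG0_add m1 m2) m3,
    psi_add φ hadd m1 m2,
    psi_zsmul φ hadd n hh,
    psi_const φ hadd a,
    psi_zsmul φ hadd b memG0_uu,
    psi_zsmul φ hadd e (memG0_pow memG0_uu 2)]

lemma nonneg_of_nat_bound {X D : ℝ} (hD : 0 ≤ D)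
    (h : ∀ Q : ℕ, 1 ≤ Q → -D ≤ (Q:ℝ) * X) : 0 ≤ X := by
  by_contra hX
  push_neg at hX
  have hx' : 0 < -X := by linarith
  obtain ⟨Q, hQ⟩ := exists_nat_gt (D / (-X))
  have hDnn : 0 ≤ D / (-X) := div_nonneg hD hx'.le
  have hQ1 : 1 ≤ Q := by
    rcases Nat.eq_zero_or_pos Q with h0 | h1
    · exfalso; subst h0; simp only [Nat.cast_zero] at hQ; linarith
    · exact h1
  have hb := h Q hQ1
  rw [div_lt_iff₀ hx'] at hQ
  nlinarith

/-- the real version of `uu`. -/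
def uut (x : ℝ) : ℝ := x / (1 - x)

lemma uu_eq_uut (t : I01) : uu t = uut (t:ℝ) := rfl

lemma uut_fixed {x s : ℝ} (hs : 0 < s) (hx : x ∈ Set.Ioo (0:ℝ) 1) (h : uut x = s) :
    x = s / (1 + s) := by
  have h1 : 1 - x ≠ 0 := by
    have := hx.2; intro hc; simp only [sub_eq_zero] at hc; linarith
  have h2 : (0:ℝ) < 1 + s := by linarith
  rw [uut, div_eq_iff h1] at h
  rw [eq_div_iff (ne_of_gt h2)]
  linarith [h]

lemma subset_Ioo {A : Set ℝ} (hsub : A ⊆ Set.Icc 0 1) (h0 : (0:ℝ) ∉ A) (h1 : (1:ℝ) ∉ A) :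
    A ⊆ Set.Ioo 0 1 := by
  intro x hx
  have h := hsub hx
  constructor
  · rcases lt_or_eq_of_le h.1 with h' | h'
    · exact h'
    · exact absurd (h' ▸ hx) h0
  · rcases lt_or_eq_of_le h.2 with h' | h'
    · exact h'
    · exact absurd (h'.symm ▸ hx) h1

lemma continuousOn_uut {A : Set ℝ} (hA : A ⊆ Set.Ioo 0 1) : ContinuousOn uut A := by
  apply ContinuousOn.div continuousOn_id
  · exact (continuous_const.sub continuous_id).continuousOn
  · intro x hx
    have := (hA hx).2
    intro hc
    simp only [sub_eq_zero] at hc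
    linarith

lemma exists_udist_bound {A : Set ℝ} (hA : IsClosed A) (hsub : A ⊆ Set.Icc 0 1)
    (h0 : (0:ℝ) ∉ A) (h1 : (1:ℝ) ∉ A) {s : ℝ} (hs : 0 < s) (hnot : s/(1+s) ∉ A) :
    ∃ ρ > 0, ∀ x ∈ A, ρ ≤ |uut x - s| := by
  rcases A.eq_empty_or_nonempty with hE | hne
  · exact ⟨1, one_pos, by subst hE; simp⟩
  · have hIoo := subset_Ioo hsub h0 h1
    have hcomp : IsCompact A := IsCompact.of_isClosed_subset isCompact_Icc hA hsub
    have hcont : ContinuousOn (fun x => |uut x - s|) A :=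
      ((continuousOn_uut hIoo).sub continuousOn_const).abs
    obtain ⟨x0, hx0A, hmin⟩ := hcomp.exists_isMinOn hne hcont
    refine ⟨|uut x0 - s|, ?_, fun x hx => isMinOn_iff.mp hmin x hx⟩
    rw [gt_iff_lt, abs_pos, sub_ne_zero]
    intro hc
    exact hnot (uut_fixed hs (hIoo hx0A) hc ▸ hx0A)

lemma exists_uu_bounds {A : Set ℝ} (hA : IsClosed A) (hsub : A ⊆ Set.Icc 0 1)
    (h0 : (0:ℝ) ∉ A) (h1 : (1:ℝ) ∉ A) (hne : A.Nonempty) :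
    ∃ w1 w2 : ℝ, 0 < w1 ∧ (∀ x ∈ A, w1 ≤ uut x) ∧ (∀ x ∈ A, uut x ≤ w2) := by
  have hIoo := subset_Ioo hsub h0 h1
  have hcomp : IsCompact A := IsCompact.of_isClosed_subset isCompact_Icc hA hsub
  have hcont : ContinuousOn uut A := continuousOn_uut hIoo
  obtain ⟨x0, hx0A, hmin⟩ := hcomp.exists_isMinOn hne hcont
  obtain ⟨x1, hx1A, hmax⟩ := hcomp.exists_isMaxOn hne hcont
  refine ⟨uut x0, uut x1, ?_, fun x hx => isMinOn_iff.mp hmin x hx,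
    fun x hx => isMaxOn_iff.mp hmax x hx⟩
  have h := hIoo hx0A
  exact div_pos h.1 (by linarith [h.2])

lemma abs_sub_t0_le {s : ℝ} (hs : 0 < s) (t : I01) :
    |(t:ℝ) - s/(1+s)| ≤ |uu t - s| := by
  have h1s : (0:ℝ) < 1 + s := by linarith
  have h2 : 1 - (t:ℝ) ≠ 0 := I01.one_sub_ne t
  have heq : (t:ℝ) - s/(1+s) = (uu t - s) * ((1 - (t:ℝ))/(1+s)) := by
    rw [uu]
    field_simp
    ring
  rw [heq, abs_mul]
  have h3 : |(1 - (t:ℝ))/(1+s)| ≤ 1 := by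
    rw [abs_div, abs_of_pos (I01.one_sub_pos t), abs_of_pos h1s, div_le_one h1s]
    have := t.2.1
    linarith
  calc |uu t - s| * |(1 - (t:ℝ))/(1+s)| ≤ |uu t - s| * 1 :=
        mul_le_mul_of_nonneg_left h3 (abs_nonneg _)
    _ = |uu t - s| := mul_one _

include hadd in
lemma psi_quad (a b e : ℤ) :
    φ (delta0 (fun t => ((a:ℝ) + (b:ℝ) * uu t) + (e:ℝ) * (uu t)^2))
      = a * φ (delta0 (fun _ => (1:ℝ))) + b * φ (delta0 uu)
        + e * φ (delta0 (fun t => (uu t)^2)) := by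
  rw [psi_add φ hadd (memG0_add (memG0_const a) (memG0_mul (memG0_const b) memG0_uu))
      (memG0_mul (memG0_const e) (memG0_pow memG0_uu 2)),
    psi_add φ hadd (memG0_const a) (memG0_mul (memG0_const b) memG0_uu),
    psi_const φ hadd a, psi_zsmul φ hadd b memG0_uu,
    psi_zsmul φ hadd e (memG0_pow memG0_uu 2)]

lemma zpow_two' (a : ℝ) : a ^ (2:ℤ) = a ^ 2 := by
  norm_cast

lemma three_slot_supp (f0 f1 f2 : I01 → ℝ) :
    ∀ n ∉ ({0, 1, 2} : Finset ℤ), (slot 0 f0 + slot 1 f1 + slot 2 f2) n = 0 := by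
  intro n hn
  simp only [Finset.mem_insert, Finset.mem_singleton, not_or] at hn
  simp [slot, Pi.add_apply, hn.1, hn.2.1, hn.2.2]

lemma sumAlpha_three (f0 f1 f2 : I01 → ℝ) (t : I01) :
    sumAlpha (slot 0 f0 + slot 1 f1 + slot 2 f2) t
      = f0 t + uu t * f1 t + (uu t)^2 * f2 t := by
  rw [sumAlpha_eq_sum _ _ (three_slot_supp f0 f1 f2) t]
  rw [show ({0,1,2} : Finset ℤ) = insert 0 (insert 1 {2}) from rfl,
    Finset.sum_insert (by decide), Finset.sum_insert (by decide), Finset.sum_singleton]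
  have h0 : ((t:ℝ)/(1-(t:ℝ))) = uu t := rfl
  simp only [slot, Pi.add_apply, h0]
  norm_num [zpow_two']
  ring

lemma sumPlain_three (f0 f1 f2 : I01 → ℝ) (t : I01) :
    sumPlain (slot 0 f0 + slot 1 f1 + slot 2 f2) t = f0 t + f1 t + f2 t := by
  rw [sumPlain_eq_sum _ _ (three_slot_supp f0 f1 f2) t]
  rw [show ({0,1,2} : Finset ℤ) = insert 0 (insert 1 {2}) from rfl,
    Finset.sum_insert (by decide), Finset.sum_insert (by decide), Finset.sum_singleton]
  simp [slot, Pi.add_apply]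
  ring

lemma two_slot_supp (f0 f1 : I01 → ℝ) :
    ∀ n ∉ ({0, 1} : Finset ℤ), (slot 0 f0 + slot 1 f1) n = 0 := by
  intro n hn
  simp only [Finset.mem_insert, Finset.mem_singleton, not_or] at hn
  simp [slot, Pi.add_apply, hn.1, hn.2]

lemma sumAlpha_two (f0 f1 : I01 → ℝ) (t : I01) :
    sumAlpha (slot 0 f0 + slot 1 f1) t = f0 t + uu t * f1 t := by
  rw [sumAlpha_eq_sum _ _ (two_slot_supp f0 f1) t]
  rw [show ({0,1} : Finset ℤ) = insert 0 {1} from rfl,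
    Finset.sum_insert (by decide), Finset.sum_singleton]
  have h0 : ((t:ℝ)/(1-(t:ℝ))) = uu t := rfl
  simp only [slot, Pi.add_apply, h0]
  norm_num

lemma sumPlain_two (f0 f1 : I01 → ℝ) (t : I01) :
    sumPlain (slot 0 f0 + slot 1 f1) t = f0 t + f1 t := by
  rw [sumPlain_eq_sum _ _ (two_slot_supp f0 f1) t]
  rw [show ({0,1} : Finset ℤ) = insert 0 {1} from rfl,
    Finset.sum_insert (by decide), Finset.sum_singleton]
  simp [slot, Pi.add_apply]

include hadd in
lemma phi_three {f0 f1 f2 : I01 → ℝ} (h0 : memG0 f0) (h1 : memG0 f1) (h2 : memG0 f2) :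
    φ (slot 0 f0 + slot 1 f1 + slot 2 f2) = φ (slot 0 f0) + φ (slot 1 f1) + φ (slot 2 f2) := by
  rw [hadd _ _ (memG_add (memG_slot 0 h0) (memG_slot 1 h1)) (memG_slot 2 h2),
    hadd _ _ (memG_slot 0 h0) (memG_slot 1 h1)]

include hadd in
lemma phi_two {f0 f1 : I01 → ℝ} (h0 : memG0 f0) (h1 : memG0 f1) :
    φ (slot 0 f0 + slot 1 f1) = φ (slot 0 f0) + φ (slot 1 f1) := by
  rw [hadd _ _ (memG_slot 0 h0) (memG_slot 1 h1)]

lemma mul_le_abs_of_bounds {u M A : ℝ} (h0 : 0 ≤ u) (h1 : u ≤ A) : u * M ≤ A * |M| :=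
  calc u * M ≤ u * |M| := mul_le_mul_of_nonneg_left (le_abs_self M) h0
    _ ≤ A * |M| := mul_le_mul_of_nonneg_right h1 (abs_nonneg M)

end Phi

end Stmt13Aux

set_option maxHeartbeats 2000000 in
open Stmt13Aux in
/-- a nonzero positive homomorphism `φ : G → ℝ` with `φ ∘ γ₊ = s·φ`,
`s > 0`, `s ≠ 1`, satisfies `s/(1+s) ∈ F₁` and `φ = r·ψ_{s/(1+s)}` for some `r > 0`. -/
theorem stmt13 (F : Set ℝ) (hFne : F.Nonempty) (hFc : IsClosed F)
    (hFsub : F ⊆ Set.Icc 0 1) (hF0 : (0:ℝ) ∉ F) (hF1 : (1:ℝ) ∉ F)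
    (F1 : Set ℝ) (hF1c : IsClosed F1)
    (hF1sub : F1 ⊆ Set.Icc 0 1) (hF10 : (0:ℝ) ∉ F1) (hF11 : (1:ℝ) ∉ F1)
    (hhalf : ((1/2 : ℝ) ∉ F ∪ F1) ∨ ((1/2 : ℝ) ∈ F ∩ F1))
    (φ : (ℤ → I01 → ℝ) → ℝ)
    (hadd : ∀ x y : ℤ → I01 → ℝ, memG x → memG y → φ (x + y) = φ x + φ y)
    (hpos : ∀ x : ℤ → I01 → ℝ, memGplus F F1 x → 0 ≤ φ x)
    (hnz : ∃ x : ℤ → I01 → ℝ, memG x ∧ φ x ≠ 0)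
    (s : ℝ) (hs : 0 < s) (hs1 : s ≠ 1)
    (heq : ∀ x : ℤ → I01 → ℝ, memG x → φ (gammaStar x) = s * φ x) :
    s / (1 + s) ∈ F1 ∧
      ∃ t : I01, (t : ℝ) = s / (1 + s) ∧
        ∃ r : ℝ, 0 < r ∧ ∀ x : ℤ → I01 → ℝ, memG x → φ x = r * sumPlain x t := by
  classical
  have hs0 : s ≠ 0 := ne_of_gt hs
  have h1s : (0:ℝ) < 1 + s := by linarith
  have ht0mem : s / (1+s) ∈ I01 := by
    constructor
    · exact div_pos hs h1s
    · rw [div_lt_one h1s]; linarith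
  set t0 : I01 := ⟨s/(1+s), ht0mem⟩ with ht0def
  have huut0 : uu t0 = s := by
    show (s/(1+s)) / (1 - s/(1+s)) = s
    rw [div_eq_iff]
    · field_simp; ring
    · intro hC
      rw [sub_eq_zero] at hC
      have : s/(1+s) < 1 := ht0mem.2
      rw [← hC] at this
      exact lt_irrefl _ this
  set c := φ (delta0 (fun _ : I01 => (1:ℝ))) with hcdef
  set M1 := φ (delta0 uu) with hM1def
  set M2 := φ (delta0 (fun t => (uu t)^2)) with hM2def
  have hcnn : 0 ≤ c :=
    psi_pos φ F F1 hpos memG0_one (fun t _ => one_pos) (fun t _ => one_pos)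
  -- bounds for uu on F
  obtain ⟨w1, w2, hw1pos, hw1, hw2⟩ := exists_uu_bounds hFc hFsub hF0 hF1 hFne
  -- main moment inequality
  have hVle : ∀ δ : ℝ, 0 < δ → M2 - 2*s*M1 + s^2*c ≤ δ*c := by
    have hs1sub : s - 1 ≠ 0 := sub_ne_zero.mpr hs1
    have hsq1 : (0:ℝ) < (s-1)^2 := by
      rcases hs1sub.lt_or_gt with h | h <;> nlinarith
    have hw1sq : (0:ℝ) < w1^2 := pow_pos hw1pos 2
    have hden : (0:ℝ) < (s-1)^2 * w1^2 := mul_pos hsq1 hw1sq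
    set W := 1 + (w2+s)^2/((s-1)^2*w1^2) with hWdef
    have hW1 : 1 ≤ W := by
      have h := div_nonneg (sq_nonneg (w2+s)) hden.le
      rw [hWdef]
      linarith
    have hWden : W * ((s-1)^2*w1^2) = (s-1)^2*w1^2 + (w2+s)^2 := by
      rw [hWdef]; field_simp
    have hWF : ∀ v : ℝ, w1 ≤ v → v ≤ w2 → (v-s)^2 ≤ W*(s-1)^2*v^2 := by
      intro v hv1 hv2
      have hv0 : 0 < v := lt_of_lt_of_le hw1pos hv1
      have h1 : (v-s)^2 ≤ (w2+s)^2 := by nlinarith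
      have h3 : w1^2 ≤ v^2 := by nlinarith
      have hWnn : 0 ≤ W*(s-1)^2 := mul_nonneg (by linarith) (sq_nonneg _)
      have h4 : W*(s-1)^2*w1^2 ≤ W*(s-1)^2*v^2 := mul_le_mul_of_nonneg_left h3 hWnn
      have h5 : W*(s-1)^2*w1^2 = (s-1)^2*w1^2 + (w2+s)^2 := by rw [← hWden]; ring
      nlinarith
    intro δ hδ
    have hs2 : (0:ℝ) < s^2 := by positivity
    have hX : 0 ≤ s^2*(δ*c - (M2 - 2*s*M1 + s^2*c)) := by
      apply nonneg_of_nat_bound (D := 2*(s^2*|c|) + s^2*|M1| + (s^2+s+1)*|M2|) (by positivity)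
      intro Q hQ1
      set Qr : ℝ := (Q:ℝ) with hQrdef
      have hQr : 1 ≤ Qr := by rw [hQrdef]; exact_mod_cast hQ1
      have hQr0 : (0:ℝ) ≤ Qr := by linarith
      set b20 : ℤ := ⌈Qr*W*s^2⌉ with hb20def
      set b11 : ℤ := ⌈-(2*Qr*W*s)⌉ with hb11def
      set b02 : ℤ := ⌈Qr*(W-1)⌉ with hb02def
      set b01 : ℤ := ⌈2*Qr*s⌉ with hb01def
      set b00 : ℤ := ⌈Qr*(δ-s^2)⌉ + 1 with hb00def
      have e20a : Qr*W*s^2 ≤ (b20:ℝ) := Int.le_ceil _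
      have e20b : (b20:ℝ) ≤ Qr*W*s^2 + 1 := (Int.ceil_lt_add_one _).le
      have e11a : -(2*Qr*W*s) ≤ (b11:ℝ) := Int.le_ceil _
      have e11b : (b11:ℝ) ≤ -(2*Qr*W*s) + 1 := (Int.ceil_lt_add_one _).le
      have e02a : Qr*(W-1) ≤ (b02:ℝ) := Int.le_ceil _
      have e02b : (b02:ℝ) ≤ Qr*(W-1) + 1 := (Int.ceil_lt_add_one _).le
      have e01a : 2*Qr*s ≤ (b01:ℝ) := Int.le_ceil _
      have e01b : (b01:ℝ) ≤ 2*Qr*s + 1 := (Int.ceil_lt_add_one _).le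
      have e00a : Qr*(δ-s^2) + 1 ≤ (b00:ℝ) := by
        rw [hb00def]; push_cast
        linarith [Int.le_ceil (Qr*(δ-s^2))]
      have e00b : (b00:ℝ) ≤ Qr*(δ-s^2) + 2 := by
        rw [hb00def]; push_cast
        linarith [Int.ceil_lt_add_one (Qr*(δ-s^2))]
      set f0 : I01 → ℝ := fun t => ((b00:ℝ) + (b01:ℝ)*uu t) + (b02:ℝ)*(uu t)^2 with hf0def
      set f1 : I01 → ℝ := fun t => (b11:ℝ)*uu t with hf1def
      set f2 : I01 → ℝ := fun _ => (b20:ℝ) with hf2def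
      have hm0 : memG0 f0 :=
        memG0_add (memG0_add (memG0_const b00) (memG0_mul (memG0_const b01) memG0_uu))
          (memG0_mul (memG0_const b02) (memG0_pow memG0_uu 2))
      have hm1 : memG0 f1 := memG0_mul (memG0_const b11) memG0_uu
      have hm2 : memG0 f2 := memG0_const b20
      have hFpos : ∀ t : I01, (t:ℝ) ∈ F →
          0 < sumAlpha (slot 0 f0 + slot 1 f1 + slot 2 f2) t := by
        intro t ht
        rw [sumAlpha_three]
        have hv0 : 0 < uu t := uu_pos t
        have hv1 : w1 ≤ uu t := by rw [uu_eq_uut]; exact hw1 _ ht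
        have hv2 : uu t ≤ w2 := by rw [uu_eq_uut]; exact hw2 _ ht
        have hZ := hWF (uu t) hv1 hv2
        have p1 : 2*Qr*s*(uu t) ≤ (b01:ℝ)*(uu t) := mul_le_mul_of_nonneg_right e01a hv0.le
        have p2 : Qr*(W-1)*(uu t)^2 ≤ (b02:ℝ)*(uu t)^2 :=
          mul_le_mul_of_nonneg_right e02a (sq_nonneg _)
        have p3 : -(2*Qr*W*s)*(uu t)^2 ≤ (b11:ℝ)*(uu t)^2 :=
          mul_le_mul_of_nonneg_right e11a (sq_nonneg _)
        have p4 : Qr*W*s^2*(uu t)^2 ≤ (b20:ℝ)*(uu t)^2 :=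
          mul_le_mul_of_nonneg_right e20a (sq_nonneg _)
        have p5 : Qr*((uu t)-s)^2 ≤ Qr*(W*(s-1)^2*(uu t)^2) :=
          mul_le_mul_of_nonneg_left hZ hQr0
        have p6 : δ*1 ≤ δ*Qr := mul_le_mul_of_nonneg_left hQr hδ.le
        rw [hf0def, hf1def, hf2def]
        simp only []
        linarith [e00a, p1, p2, p3, p4, p5, p6]
      have hF1pos : ∀ t : I01, (t:ℝ) ∈ F1 →
          0 < sumPlain (slot 0 f0 + slot 1 f1 + slot 2 f2) t := by
        intro t _
        rw [sumPlain_three]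
        have hv0 : 0 < uu t := uu_pos t
        have p1 : 2*Qr*s*(uu t) ≤ (b01:ℝ)*(uu t) := mul_le_mul_of_nonneg_right e01a hv0.le
        have p2 : Qr*(W-1)*(uu t)^2 ≤ (b02:ℝ)*(uu t)^2 :=
          mul_le_mul_of_nonneg_right e02a (sq_nonneg _)
        have p3 : -(2*Qr*W*s)*(uu t) ≤ (b11:ℝ)*(uu t) :=
          mul_le_mul_of_nonneg_right e11a hv0.le
        have p5 : 0 ≤ Qr*((W-1)*((uu t)-s)^2) :=
          mul_nonneg hQr0 (mul_nonneg (by linarith) (sq_nonneg _))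
        have p6 : δ*1 ≤ δ*Qr := mul_le_mul_of_nonneg_left hQr hδ.le
        rw [hf0def, hf1def, hf2def]
        simp only []
        linarith [e00a, p1, p2, p3, e20a, p5, p6]
      have hmemx : memG (slot 0 f0 + slot 1 f1 + slot 2 f2) :=
        memG_add (memG_add (memG_slot 0 hm0) (memG_slot 1 hm1)) (memG_slot 2 hm2)
      have hphi : 0 ≤ φ (slot 0 f0 + slot 1 f1 + slot 2 f2) :=
        hpos _ ⟨hmemx, Or.inl ⟨hFpos, hF1pos⟩⟩
      have hφ3 := phi_three φ hadd hm0 hm1 hm2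
      have hsl0 : φ (slot 0 f0) = (b00:ℝ)*c + (b01:ℝ)*M1 + (b02:ℝ)*M2 := by
        rw [slot_zero, hf0def]
        exact psi_quad φ hadd b00 b01 b02
      have hsl1 : φ (slot 1 f1) = s^(-1:ℤ)*((b11:ℝ)*M2) := by
        rw [phi_slot φ s hs0 heq 1 f1 hm1]
        congr 1
        have hfe : (fun t => uu t ^ (1:ℤ) * f1 t) = fun t : I01 => (b11:ℝ)*(uu t)^2 := by
          funext t
          rw [hf1def]
          simp only [zpow_one]
          ring
        rw [hfe, psi_zsmul φ hadd b11 (memG0_pow memG0_uu 2), hM2def]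
      have hsl2 : φ (slot 2 f2) = s^(-2:ℤ)*((b20:ℝ)*M2) := by
        rw [phi_slot φ s hs0 heq 2 f2 hm2]
        congr 1
        have hfe : (fun t => uu t ^ (2:ℤ) * f2 t) = fun t : I01 => (b20:ℝ)*(uu t)^2 := by
          funext t
          rw [hf2def]
          simp only [zpow_two']
          ring
        rw [hfe, psi_zsmul φ hadd b20 (memG0_pow memG0_uu 2), hM2def]
      have hR : 0 ≤ ((b00:ℝ)*c + (b01:ℝ)*M1 + (b02:ℝ)*M2) + s^(-1:ℤ)*((b11:ℝ)*M2)
          + s^(-2:ℤ)*((b20:ℝ)*M2) := by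
        rw [← hsl0, ← hsl1, ← hsl2, ← hφ3]
        exact hphi
      have hz1 : (s:ℝ)^(-1:ℤ) = s⁻¹ := zpow_neg_one s
      have hz2 : (s:ℝ)^(-2:ℤ) = (s^2)⁻¹ := by rw [zpow_neg, zpow_two']
      rw [hz1, hz2] at hR
      have hR2 : 0 ≤ (b00:ℝ)*s^2*c + (b01:ℝ)*s^2*M1 + (b02:ℝ)*s^2*M2 + (b11:ℝ)*s*M2
          + (b20:ℝ)*M2 := by
        have h := mul_nonneg (le_of_lt hs2) hR
        have hid : s^2*((((b00:ℝ)*c + (b01:ℝ)*M1 + (b02:ℝ)*M2) + s⁻¹*((b11:ℝ)*M2)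
            + (s^2)⁻¹*((b20:ℝ)*M2)))
            = (b00:ℝ)*s^2*c + (b01:ℝ)*s^2*M1 + (b02:ℝ)*s^2*M2 + (b11:ℝ)*s*M2
              + (b20:ℝ)*M2 := by
          field_simp
        rw [hid] at h
        exact h
      have t1 : ((b00:ℝ) - Qr*(δ-s^2))*(s^2*c) ≤ 2*|s^2*c| :=
        mul_le_abs_of_bounds (by linarith) (by linarith)
      have t2 : ((b01:ℝ) - 2*Qr*s)*(s^2*M1) ≤ 1*|s^2*M1| :=
        mul_le_abs_of_bounds (by linarith) (by linarith)
      have q1 : Qr*(W-1)*s^2 ≤ (b02:ℝ)*s^2 := mul_le_mul_of_nonneg_right e02a (sq_nonneg s)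
      have q1' : (b02:ℝ)*s^2 ≤ (Qr*(W-1)+1)*s^2 := mul_le_mul_of_nonneg_right e02b (sq_nonneg s)
      have q2 : -(2*Qr*W*s)*s ≤ (b11:ℝ)*s := mul_le_mul_of_nonneg_right e11a hs.le
      have q2' : (b11:ℝ)*s ≤ (-(2*Qr*W*s)+1)*s := mul_le_mul_of_nonneg_right e11b hs.le
      have hu2low' : 0 ≤ (b02:ℝ)*s^2 + (b11:ℝ)*s + (b20:ℝ) + Qr*s^2 := by
        linarith [q1, q2, e20a]
      have hu2up : (b02:ℝ)*s^2 + (b11:ℝ)*s + (b20:ℝ) + Qr*s^2 ≤ s^2+s+1 := by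
        linarith [q1', q2', e20b]
      have t3 : ((b02:ℝ)*s^2 + (b11:ℝ)*s + (b20:ℝ) + Qr*s^2)*M2 ≤ (s^2+s+1)*|M2| :=
        mul_le_abs_of_bounds hu2low' hu2up
      have habs1 : |s^2*c| = s^2*|c| := by rw [abs_mul, abs_of_nonneg (sq_nonneg s)]
      have habs2 : |s^2*M1| = s^2*|M1| := by rw [abs_mul, abs_of_nonneg (sq_nonneg s)]
      rw [habs1] at t1
      rw [habs2] at t2
      linarith [hR2, t1, t2, t3]
    have h0 := le_of_mul_le_mul_left
      (by linarith : s^2*0 ≤ s^2*(δ*c - (M2 - 2*s*M1 + s^2*c))) hs2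
    linarith
  have hVnonpos : M2 - 2*s*M1 + s^2*c ≤ 0 := by
    by_contra hV
    push_neg at hV
    set V := M2 - 2*s*M1 + s^2*c with hVdef
    have hc1 : (0:ℝ) < c + 1 := by linarith
    have hδ : 0 < V/(c+1) := div_pos hV hc1
    have hkey : (V/(c+1))*(c+1) = V := div_mul_cancel₀ _ (ne_of_gt hc1)
    have := hVle (V/(c+1)) hδ
    nlinarith
  -- evaluation: ψ(h) = c · h(t₀)
  have hev1 : ∀ h : I01 → ℝ, memG0 h → ∀ p q : ℤ, 0 < q → (p:ℝ) < (q:ℝ) * h t0 →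
      (p:ℝ)*c ≤ (q:ℝ) * φ (delta0 h) := by
    intro h hh p q hq hpq
    set m : I01 → ℝ := fun t => (q:ℝ)*h t - (p:ℝ) with hmdef
    have hmm : memG0 m := by
      have h1 := memG0_add (memG0_mul (memG0_const q) hh) (memG0_const (-p))
      have he : (fun t : I01 => ((q:ℤ):ℝ) * h t + ((-p:ℤ):ℝ)) = m := by
        funext t; rw [hmdef]; push_cast; ring
      rwa [he] at h1
    have hm0pos : 0 < m t0 := by rw [hmdef]; simp only []; linarith
    have hcont : ContinuousAt m t0 := (memG0_continuous hmm).continuousAt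
    rw [Metric.continuousAt_iff] at hcont
    obtain ⟨ρ, hρpos, hρ⟩ := hcont (m t0) hm0pos
    obtain ⟨P, mm, nn, hP⟩ := hmm
    set mR : ℝ → ℝ := fun x => (Polynomial.aeval x P) / (x^mm * (1-x)^nn) with hmRdef
    have hKsub : F ∪ F1 ⊆ Set.Icc 0 1 := Set.union_subset hFsub hF1sub
    have hKIoo : F ∪ F1 ⊆ Set.Ioo 0 1 :=
      subset_Ioo hKsub (fun hx => Or.elim hx hF0 hF10) (fun hx => Or.elim hx hF1 hF11)
    have hKcomp : IsCompact (F ∪ F1) :=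
      IsCompact.of_isClosed_subset isCompact_Icc (hFc.union hF1c) hKsub
    have hKne : (F ∪ F1).Nonempty := by
      obtain ⟨xF, hxF⟩ := hFne
      exact ⟨xF, Or.inl hxF⟩
    have hcontR : ContinuousOn mR (F ∪ F1) := by
      apply ContinuousOn.div
      · exact (P.continuous_aeval).continuousOn
      · exact Continuous.continuousOn (by continuity)
      · intro x hx
        have hx' := hKIoo hx
        refine mul_ne_zero (pow_ne_zero _ (ne_of_gt hx'.1)) (pow_ne_zero _ ?_)
        intro hcontr
        rw [sub_eq_zero] at hcontr
        exact absurd hcontr.symm (ne_of_lt hx'.2)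
    obtain ⟨x0, hx0K, hminOn⟩ := hKcomp.exists_isMinOn hKne hcontR
    set L := mR x0 with hLdef
    have hmL : ∀ t : I01, (t:ℝ) ∈ F ∪ F1 → L ≤ m t := by
      intro t ht
      have hmt : m t = mR (t:ℝ) := by rw [hP t, hmRdef]
      rw [hmt]
      exact isMinOn_iff.mp hminOn _ ht
    set C := (1 + |L|)/ρ^2 with hCdef
    have hC0 : 0 ≤ C := by positivity
    have hCρ : C*ρ^2 = 1 + |L| := div_mul_cancel₀ _ (by positivity)
    have hpoint : ∀ t : I01, (t:ℝ) ∈ F ∪ F1 → 0 ≤ m t + C*(uu t - s)^2 := by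
      intro t ht
      rcases le_or_gt ρ |uu t - s| with hfar | hnear
      · have h1 : L ≤ m t := hmL t ht
        have h2 : ρ^2 ≤ (uu t - s)^2 := by
          nlinarith [sq_abs (uu t - s), abs_nonneg (uu t - s)]
        have h3 : C*ρ^2 ≤ C*(uu t - s)^2 := mul_le_mul_of_nonneg_left h2 hC0
        have h4 := neg_abs_le L
        linarith [hCρ]
      · have hdist : dist t t0 < ρ := by
          rw [Subtype.dist_eq, Real.dist_eq]
          have h5 : |(t:ℝ) - s/(1+s)| ≤ |uu t - s| := abs_sub_t0_le hs t
          have h6 : ((t0:I01):ℝ) = s/(1+s) := rfl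
          rw [h6]
          linarith
        have h7 := hρ hdist
        rw [Real.dist_eq] at h7
        have h8 := abs_lt.mp h7
        nlinarith [mul_nonneg hC0 (sq_nonneg (uu t - s))]
    have hbig : 0 ≤ (q:ℝ)*φ (delta0 h) - (p:ℝ)*c + C*(M2 - 2*s*M1 + s^2*c) := by
      apply nonneg_of_nat_bound (D := 2*|c| + |M1| + |M2|) (by positivity)
      intro Q hQ1
      set Qr : ℝ := (Q:ℝ) with hQrdef
      have hQr : 1 ≤ Qr := by rw [hQrdef]; exact_mod_cast hQ1
      have hQr0 : (0:ℝ) ≤ Qr := by linarith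
      set a2 : ℤ := ⌈Qr*C⌉ with ha2def
      set a1 : ℤ := ⌈-(2*Qr*C*s)⌉ with ha1def
      set a0 : ℤ := ⌈Qr*C*s^2⌉ + 1 with ha0def
      have e2a : Qr*C ≤ (a2:ℝ) := Int.le_ceil _
      have e2b : (a2:ℝ) ≤ Qr*C + 1 := (Int.ceil_lt_add_one _).le
      have e1a : -(2*Qr*C*s) ≤ (a1:ℝ) := Int.le_ceil _
      have e1b : (a1:ℝ) ≤ -(2*Qr*C*s) + 1 := (Int.ceil_lt_add_one _).le
      have e0a : Qr*C*s^2 + 1 ≤ (a0:ℝ) := by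
        rw [ha0def]; push_cast; linarith [Int.le_ceil (Qr*C*s^2)]
      have e0b : (a0:ℝ) ≤ Qr*C*s^2 + 2 := by
        rw [ha0def]; push_cast; linarith [Int.ceil_lt_add_one (Qr*C*s^2)]
      set n : ℤ := (Q:ℤ)*q with hndef
      set aa : ℤ := a0 - (Q:ℤ)*p with haadef
      have hcast1 : (n:ℝ) = Qr*(q:ℝ) := by rw [hndef, hQrdef]; push_cast; ring
      have hcast2 : (aa:ℝ) = (a0:ℝ) - Qr*(p:ℝ) := by rw [haadef, hQrdef]; push_cast; ring
      set fQ : I01 → ℝ :=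
        fun t => (((n:ℝ)*h t + (aa:ℝ)) + (a1:ℝ)*uu t) + (a2:ℝ)*(uu t)^2 with hfQdef
      have hmfQ : memG0 fQ :=
        memG0_add (memG0_add (memG0_add (memG0_mul (memG0_const n) hh) (memG0_const aa))
          (memG0_mul (memG0_const a1) memG0_uu))
          (memG0_mul (memG0_const a2) (memG0_pow memG0_uu 2))
      have hfQpos : ∀ t : I01, (t:ℝ) ∈ F ∪ F1 → 0 < fQ t := by
        intro t ht
        have hpt := hpoint t ht
        have hmt : m t = (q:ℝ)*h t - (p:ℝ) := by rw [hmdef]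
        rw [hmt] at hpt
        have hv0 : 0 < uu t := uu_pos t
        have p1 : -(2*Qr*C*s)*uu t ≤ (a1:ℝ)*uu t := mul_le_mul_of_nonneg_right e1a hv0.le
        have p2 : Qr*C*(uu t)^2 ≤ (a2:ℝ)*(uu t)^2 := mul_le_mul_of_nonneg_right e2a (sq_nonneg _)
        have p3 : Qr*0 ≤ Qr*(((q:ℝ)*h t - (p:ℝ)) + C*(uu t - s)^2) :=
          mul_le_mul_of_nonneg_left hpt hQr0
        rw [hfQdef]
        simp only []
        rw [hcast1, hcast2]
        nlinarith [e0a, p1, p2, p3]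
      have hψpos : 0 ≤ φ (delta0 fQ) :=
        psi_pos φ F F1 hpos hmfQ (fun t ht => hfQpos t (Or.inl ht))
          (fun t ht => hfQpos t (Or.inr ht))
      have hψeq : φ (delta0 fQ) = (n:ℝ) * φ (delta0 h) + (aa:ℝ)*c + (a1:ℝ)*M1 + (a2:ℝ)*M2 := by
        rw [hfQdef]
        exact psi_comb φ hadd n aa a1 a2 hh
      rw [hψeq, hcast1, hcast2] at hψpos
      have t1 : ((a0:ℝ) - Qr*(p:ℝ) - (Qr*C*s^2 - Qr*(p:ℝ)))*c ≤ 2*|c| :=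
        mul_le_abs_of_bounds (by linarith) (by linarith)
      have t2 : ((a1:ℝ) + 2*Qr*C*s)*M1 ≤ 1*|M1| :=
        mul_le_abs_of_bounds (by linarith) (by linarith)
      have t3 : ((a2:ℝ) - Qr*C)*M2 ≤ 1*|M2| :=
        mul_le_abs_of_bounds (by linarith) (by linarith)
      linarith [hψpos, t1, t2, t3]
    have hCV := mul_le_mul_of_nonneg_left hVnonpos hC0
    rw [mul_zero] at hCV
    linarith [hbig, hCV]
  have hlow : ∀ h : I01 → ℝ, memG0 h → ∀ r : ℚ, (r:ℝ) < h t0 →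
      (r:ℝ)*c ≤ φ (delta0 h) := by
    intro h hh r hr
    have hqpos : (0:ℝ) < (r.den:ℝ) := by
      exact_mod_cast r.pos
    have hden0 : (r.den:ℝ) ≠ 0 := ne_of_gt hqpos
    have hcast : ((r.num:ℝ)) = (r:ℝ) * (r.den:ℝ) := by
      rw [Rat.cast_def, div_mul_cancel₀ _ hden0]
    have h1 : ((r.num:ℝ)) < ((r.den:ℤ):ℝ) * h t0 := by
      push_cast
      rw [hcast]
      have := mul_lt_mul_of_pos_left hr hqpos
      linarith
    have h2 := hev1 h hh r.num (r.den:ℤ) (by exact_mod_cast r.pos) h1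
    push_cast at h2
    rw [hcast] at h2
    nlinarith
  have hev : ∀ h : I01 → ℝ, memG0 h → φ (delta0 h) = c * h t0 := by
    intro h hh
    have hge : ∀ (h' : I01 → ℝ), memG0 h' → c * h' t0 ≤ φ (delta0 h') := by
      intro h' hh'
      by_contra hlt
      push_neg at hlt
      rcases eq_or_lt_of_le hcnn with hc0 | hcpos'
      · obtain ⟨r, hr⟩ := exists_rat_lt (h' t0)
        have := hlow h' hh' r hr
        rw [← hc0] at this hlt
        simp at this hlt
        linarith
      · have hdiv : φ (delta0 h') / c < h' t0 := by
          rw [div_lt_iff₀ hcpos']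
          nlinarith
        obtain ⟨r, hr1, hr2⟩ := exists_rat_btwn hdiv
        have := hlow h' hh' r hr2
        rw [div_lt_iff₀ hcpos'] at hr1
        nlinarith
    have h1 := hge h hh
    have h2 := hge (fun t => -(h t)) (memG0_neg hh)
    rw [psi_neg φ hadd hh] at h2
    simp only [mul_neg] at h2
    linarith
  -- the representation formula
  have hFORM : ∀ x : ℤ → I01 → ℝ, memG x → φ x = c * sumPlain x t0 := by
    intro x hx
    have hSsupp : ∀ n ∉ hx.2.toFinset, x n = 0 := by
      intro n hn
      by_contra h
      exact hn (hx.2.mem_toFinset.mpr h)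
    rw [phi_decomp φ hadd hx.2.toFinset x hx hSsupp, sumPlain_eq_sum x hx.2.toFinset hSsupp t0,
      Finset.mul_sum]
    apply Finset.sum_congr rfl
    intro i _
    rw [phi_slot φ s hs0 heq i (x i) (hx.1 i),
      hev _ (memG0_mul (memG0_uu_zpow i) (hx.1 i))]
    show s^(-i) * (c * (uu t0 ^ i * x i t0)) = c * x i t0
    rw [huut0, zpow_neg]
    have hsi : s^(i:ℤ) ≠ 0 := zpow_ne_zero i hs0
    field_simp
  -- positivity of c
  have hcpos : 0 < c := by
    rcases eq_or_lt_of_le hcnn with hc0 | h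
    · exfalso
      obtain ⟨x, hxG, hxne⟩ := hnz
      rw [hFORM x hxG, ← hc0] at hxne
      simp at hxne
    · exact h
  -- membership of t₀ in F₁
  have hmemF1 : s/(1+s) ∈ F1 := by
    by_contra hnot
    obtain ⟨ρ1, hρ1pos, hρ1⟩ := exists_udist_bound hF1c hF1sub hF10 hF11 hs hnot
    obtain ⟨A, N, ρ, hρpos, hρF1, hnear, hAN⟩ :
        ∃ (A N : ℤ) (ρ : ℝ), 0 < ρ ∧ (∀ x ∈ F1, ρ ≤ |uut x - s|) ∧
          (∀ t : I01, (t:ℝ) ∈ F → |uu t - s| ≤ ρ → 0 < (A:ℝ) + (N:ℝ)*uu t) ∧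
          ((A:ℝ) + (N:ℝ) ≤ -1) := by
      rcases lt_or_gt_of_ne hs1 with hlt | hgt
      · -- s < 1
        set nn : ℤ := ⌈(2:ℝ)/(1-s)⌉ with hnndef
        have h1ms : (0:ℝ) < 1 - s := by linarith
        have hn1 : (2:ℝ)/(1-s) ≤ (nn:ℝ) := Int.le_ceil _
        have hn2 : (2:ℝ) ≤ (nn:ℝ)*(1-s) := by
          rw [div_le_iff₀ h1ms] at hn1
          linarith
        have hnn0 : (0:ℝ) < (nn:ℝ) := by nlinarith
        have hnn1 : (0:ℝ) < (nn:ℝ) + 1 := by linarith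
        have hgap : (0:ℝ) < (nn:ℝ)*(1-s) - 1 := by linarith
        have hdd : (((nn:ℝ)*(1-s) - 1)/((nn:ℝ)+1)) * ((nn:ℝ)+1) = (nn:ℝ)*(1-s) - 1 :=
          div_mul_cancel₀ _ (ne_of_gt hnn1)
        have hdpos : 0 < ((nn:ℝ)*(1-s) - 1)/((nn:ℝ)+1) := div_pos hgap hnn1
        refine ⟨nn - 1, -nn, min ρ1 (((nn:ℝ)*(1-s) - 1)/((nn:ℝ)+1)), lt_min hρ1pos hdpos,
          ?_, ?_, ?_⟩
        · intro x hx
          exact le_trans (min_le_left _ _) (hρ1 x hx)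
        · intro t _ hd
          push_cast
          have hd2 : uu t - s ≤ ((nn:ℝ)*(1-s) - 1)/((nn:ℝ)+1) :=
            le_trans (le_abs_self _) (le_trans hd (min_le_right _ _))
          have h10 : (nn:ℝ)*(uu t - s) ≤ (nn:ℝ)*(((nn:ℝ)*(1-s) - 1)/((nn:ℝ)+1)) :=
            mul_le_mul_of_nonneg_left hd2 hnn0.le
          nlinarith [hdd, hdpos]
        · push_cast
          linarith
      · -- s > 1
        set nn : ℤ := ⌈(2:ℝ)/(s-1)⌉ with hnndef
        have h1ms : (0:ℝ) < s - 1 := by linarith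
        have hn1 : (2:ℝ)/(s-1) ≤ (nn:ℝ) := Int.le_ceil _
        have hn2 : (2:ℝ) ≤ (nn:ℝ)*(s-1) := by
          rw [div_le_iff₀ h1ms] at hn1
          linarith
        have hnn0 : (0:ℝ) < (nn:ℝ) := by nlinarith
        have hnn1 : (0:ℝ) < (nn:ℝ) + 1 := by linarith
        have hgap : (0:ℝ) < (nn:ℝ)*(s-1) - 1 := by linarith
        have hdd : (((nn:ℝ)*(s-1) - 1)/((nn:ℝ)+1)) * ((nn:ℝ)+1) = (nn:ℝ)*(s-1) - 1 :=
          div_mul_cancel₀ _ (ne_of_gt hnn1)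
        have hdpos : 0 < ((nn:ℝ)*(s-1) - 1)/((nn:ℝ)+1) := div_pos hgap hnn1
        refine ⟨-nn - 1, nn, min ρ1 (((nn:ℝ)*(s-1) - 1)/((nn:ℝ)+1)), lt_min hρ1pos hdpos,
          ?_, ?_, ?_⟩
        · intro x hx
          exact le_trans (min_le_left _ _) (hρ1 x hx)
        · intro t _ hd
          push_cast
          have hd2 : s - uu t ≤ ((nn:ℝ)*(s-1) - 1)/((nn:ℝ)+1) :=
            le_trans (le_trans (by rw [abs_sub_comm]; exact le_abs_self _) hd) (min_le_right _ _)
          have h10 : (nn:ℝ)*(s - uu t) ≤ (nn:ℝ)*(((nn:ℝ)*(s-1) - 1)/((nn:ℝ)+1)) :=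
            mul_le_mul_of_nonneg_left hd2 hnn0.le
          nlinarith [hdd, hdpos]
        · push_cast
          linarith
    set Y : ℝ := |(A:ℝ)| + (|(N:ℝ)|+1)*(|w2|+1) + |(A:ℝ)+(N:ℝ)| + 5 with hYdef
    have hY0 : 0 ≤ Y := by positivity
    obtain ⟨q0, hq0⟩ := exists_nat_ge ((Y + 3/2)/ρ)
    have hqρ : Y + 3/2 ≤ (q0:ℝ)*ρ := by
      rw [div_le_iff₀ hρpos] at hq0
      linarith
    set p : ℤ := round ((q0:ℝ)*s) with hpdef
    have hround : |(q0:ℝ)*s - (p:ℝ)| ≤ 1/2 := by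
      rw [hpdef]
      exact abs_sub_round _
    set g : I01 → ℝ := fun t => ((q0:ℝ)*uu t - (p:ℝ))^2 with hgdef
    have hmg : memG0 g := by
      have h1 : memG0 (fun t : I01 => (((q0:ℤ):ℝ)*uu t + ((-p:ℤ):ℝ))) :=
        memG0_add (memG0_mul (memG0_const (q0:ℤ)) memG0_uu) (memG0_const (-p))
      have h2 := memG0_pow h1 2
      have he : (fun t : I01 => ((((q0:ℤ):ℝ)*uu t + ((-p:ℤ):ℝ)))^2) = g := by
        funext t
        rw [hgdef]
        push_cast
        ring
      rwa [he] at h2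
    set f0 : I01 → ℝ := fun t => (A:ℝ) + g t with hf0def
    set f1 : I01 → ℝ := fun _ => (N:ℝ) with hf1def
    have hmf0 : memG0 f0 := memG0_add (memG0_const A) hmg
    have hmf1 : memG0 f1 := memG0_const N
    have hq0nn : (0:ℝ) ≤ (q0:ℝ) := Nat.cast_nonneg _
    have hfar : ∀ v : ℝ, ρ ≤ |v - s| → Y + 1 ≤ ((q0:ℝ)*v - (p:ℝ))^2 := by
      intro v hv
      have h1 : |(q0:ℝ)*(v-s)| ≤ |(q0:ℝ)*v - p| + |(q0:ℝ)*s - p| := by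
        have he : (q0:ℝ)*(v-s) = ((q0:ℝ)*v - p) + -((q0:ℝ)*s - p) := by ring
        rw [he]
        exact (abs_add_le _ _).trans (by rw [abs_neg])
      have h2 : |(q0:ℝ)*(v-s)| = (q0:ℝ)*|v-s| := by
        rw [abs_mul, abs_of_nonneg hq0nn]
      have h3 : (q0:ℝ)*ρ ≤ (q0:ℝ)*|v-s| := mul_le_mul_of_nonneg_left hv hq0nn
      have h4 : Y + 1 ≤ |(q0:ℝ)*v - p| := by linarith
      have h5 : (Y+1)^2 ≤ |(q0:ℝ)*v - p|^2 := by
        nlinarith [abs_nonneg ((q0:ℝ)*v - p)]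
      rw [sq_abs] at h5
      nlinarith
    have hFpos : ∀ t : I01, (t:ℝ) ∈ F → 0 < sumAlpha (slot 0 f0 + slot 1 f1) t := by
      intro t ht
      rw [sumAlpha_two, hf0def, hf1def]
      simp only [hgdef]
      have hv0 : 0 < uu t := uu_pos t
      have hv2 : uu t ≤ w2 := by rw [uu_eq_uut]; exact hw2 _ ht
      rcases le_or_gt (|uu t - s|) ρ with hcase | hcase
      · have hp1 := hnear t ht hcase
        nlinarith [sq_nonneg ((q0:ℝ)*uu t - (p:ℝ))]
      · have h6 := hfar (uu t) hcase.le
        have h7 : |(N:ℝ)*uu t| ≤ (|(N:ℝ)|+1)*(|w2|+1) := by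
          rw [abs_mul, abs_of_pos hv0]
          have h8 : uu t ≤ |w2| := le_trans hv2 (le_abs_self _)
          nlinarith [abs_nonneg (N:ℝ), abs_nonneg w2]
        have h9 := neg_abs_le ((N:ℝ)*uu t)
        have h10 := neg_abs_le (A:ℝ)
        rw [hYdef] at h6
        nlinarith [abs_nonneg ((A:ℝ)+(N:ℝ))]
    have hF1pos : ∀ t : I01, (t:ℝ) ∈ F1 → 0 < sumPlain (slot 0 f0 + slot 1 f1) t := by
      intro t ht
      rw [sumPlain_two, hf0def, hf1def]
      simp only [hgdef]
      have h6 := hfar (uu t) (by rw [uu_eq_uut]; exact hρF1 _ ht)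
      have h10 := neg_abs_le ((A:ℝ)+(N:ℝ))
      rw [hYdef] at h6
      nlinarith [abs_nonneg (A:ℝ), abs_nonneg (N:ℝ), abs_nonneg w2,
        abs_nonneg ((N:ℝ)), mul_nonneg (abs_nonneg (N:ℝ)) (abs_nonneg w2)]
    have hmemx : memG (slot 0 f0 + slot 1 f1) := memG_add (memG_slot 0 hmf0) (memG_slot 1 hmf1)
    have hphi : 0 ≤ φ (slot 0 f0 + slot 1 f1) := hpos _ ⟨hmemx, Or.inl ⟨hFpos, hF1pos⟩⟩
    have hform := hFORM _ hmemx
    rw [sumPlain_two] at hform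
    have hgt0 : g t0 ≤ 1/4 := by
      simp only [hgdef]
      rw [huut0]
      nlinarith [hround, sq_abs ((q0:ℝ)*s - (p:ℝ)), abs_nonneg ((q0:ℝ)*s - (p:ℝ))]
    have hval : f0 t0 + f1 t0 ≤ -3/4 := by
      rw [hf0def, hf1def]
      simp only []
      linarith [hgt0, hAN]
    have hmul : c*(f0 t0 + f1 t0) ≤ c*(-3/4) := mul_le_mul_of_nonneg_left hval hcpos.le
    rw [hform] at hphi
    have hcontr : c * (-3/4) < 0 := by nlinarith
    exact absurd hphi (not_le.mpr (lt_of_le_of_lt hmul hcontr))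
  exact ⟨hmemF1, t0, rfl, c, hcpos, hFORM⟩

end
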